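/- For every k ≥ 0 and every finite alphabet Σ, every k-piecewise testable language over Σ is definable by a TL[#←] formula of depth at most k. -/

import Mathlib

mutual
  /-- Formulas of TL[#←]. -/
  inductive TLFormula (σ : Type) : Type
    | sym : σ → TLFormula σ
    | lt : TLTerm σ → TLTerm σ → TLFormula σ
    | not : TLFormula σ → TLFormula σ
    | and : TLFormula σ → TLFormula σ → TLFormula σ
  /-- Terms of TL[#←]. -/
  inductive TLTerm (σ : Type) : Type
    | countL : TLFormula σ → TLTerm σ
    | add : TLTerm σ → TLTerm σ → TLTerm σ
    | one : TLTerm σ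
end

mutual
  /-- Satisfaction `w,i ⊨ φ` (positions are 0-indexed, `0 ≤ i < |w|`). -/
  def TLFormula.sat {σ : Type} [DecidableEq σ] : TLFormula σ → List σ → ℕ → Bool
    | .sym c, w, i => decide (w[i]? = some c)
    | .lt t₁ t₂, w, i => decide (TLTerm.val t₁ w i < TLTerm.val t₂ w i)
    | .not φ, w, i => !(TLFormula.sat φ w i)
    | .and φ₁ φ₂, w, i => TLFormula.sat φ₁ w i && TLFormula.sat φ₂ w i
  /-- Value `t^{w,i}` of a term; `#←[φ]^{w,i}` counts positions `j ≤ i` with `w,j ⊨ φ`. -/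
  def TLTerm.val {σ : Type} [DecidableEq σ] : TLTerm σ → List σ → ℕ → ℕ
    | .countL φ, w, i => ((List.range (i + 1)).filter (fun j => TLFormula.sat φ w j)).length
    | .add t₁ t₂, w, i => TLTerm.val t₁ w i + TLTerm.val t₂ w i
    | .one, _, _ => 1
end

mutual
  /-- Nesting depth of `#←` in a formula. -/
  def TLFormula.depth {σ : Type} : TLFormula σ → ℕ
    | .sym _ => 0
    | .lt t₁ t₂ => max (TLTerm.depth t₁) (TLTerm.depth t₂)
    | .not φ => TLFormula.depth φ
    | .and φ₁ φ₂ => max (TLFormula.depth φ₁) (TLFormula.depth φ₂)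
  /-- Nesting depth of `#←` in a term. -/
  def TLTerm.depth {σ : Type} : TLTerm σ → ℕ
    | .countL φ => TLFormula.depth φ + 1
    | .add t₁ t₂ => max (TLTerm.depth t₁) (TLTerm.depth t₂)
    | .one => 0
end

/-- `φ` defines `L`: a nonempty string is in `L` iff `φ` is satisfied at its last position. -/
def TLFormula.defines {σ : Type} [DecidableEq σ] (φ : TLFormula σ) (L : Set (List σ)) : Prop :=
  ∀ w : List σ, w ≠ [] → (w ∈ L ↔ φ.sat w (w.length - 1) = true)

/-- The J-expression `Σ* σ₁ Σ* σ₂ Σ* ⋯ Σ* σₘ Σ*` determined by the list `[σ₁, …, σₘ]`. -/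
def Jexpr {σ : Type*} : List σ → Language σ
  | [] => ⊤
  | c :: rest => ⊤ * {[c]} * Jexpr rest

/-- Boolean combinations (union, intersection, complement) of a family `G` of sets. -/
inductive BoolComb {α : Type*} (G : Set (Set α)) : Set α → Prop
  | base {s : Set α} : s ∈ G → BoolComb G s
  | compl {s : Set α} : BoolComb G s → BoolComb G sᶜ
  | union {s t : Set α} : BoolComb G s → BoolComb G t → BoolComb G (s ∪ t)
  | inter {s t : Set α} : BoolComb G s → BoolComb G t → BoolComb G (s ∩ t)

/-- A language is `k`-piecewise testable if it is a Boolean combination of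
J-expressions each with at most `k` symbols. -/
def PiecewiseTestable {σ : Type*} (k : ℕ) (L : Language σ) : Prop :=
  BoolComb {M | ∃ l : List σ, l.length ≤ k ∧ M = Jexpr l} L

/-! ### Auxiliary definitions and lemmas -/

section Aux

variable {σ : Type} [DecidableEq σ]

/-- The always-true formula. -/
def tlTrue : TLFormula σ := .not (.lt .one .one)

/-- Disjunction. -/
def tlOr (a b : TLFormula σ) : TLFormula σ := .not (TLFormula.and (.not a) (.not b))

/-- `∃ j' ≤ j, θ(j')`. -/
def exLe (θ : TLFormula σ) : TLFormula σ := .not (.lt (.countL θ) .one)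

/-- `∃ j' < j, θ(j')`. -/
def exLt (θ : TLFormula σ) : TLFormula σ :=
  tlOr (TLFormula.lt TLTerm.one (TLTerm.countL θ)) ((exLe θ).and θ.not)

/-- `(strictφ r).sat w j` will say: `r.reverse` is a subsequence of `w.take j`. -/
def strictφ : List σ → TLFormula σ
  | [] => tlTrue
  | c :: r => exLt ((TLFormula.sym c).and (strictφ r))

/-- `(topφ r).sat w i` will say: `r.reverse` is a subsequence of `w.take (i+1)`. -/
def topφ : List σ → TLFormula σ
  | [] => tlTrue
  | c :: r => exLe ((TLFormula.sym c).and (strictφ r))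

@[simp] lemma tlTrue_sat (w : List σ) (i : ℕ) : (tlTrue : TLFormula σ).sat w i = true := by
  simp [tlTrue, TLFormula.sat, TLTerm.val]

@[simp] lemma tlOr_sat (a b : TLFormula σ) (w : List σ) (i : ℕ) :
    (tlOr a b).sat w i = (a.sat w i || b.sat w i) := by
  simp [tlOr, TLFormula.sat]

@[simp] lemma sat_sym (c : σ) (w : List σ) (i : ℕ) :
    (TLFormula.sym c).sat w i = decide (w[i]? = some c) := by simp [TLFormula.sat]

@[simp] lemma sat_not (φ : TLFormula σ) (w : List σ) (i : ℕ) :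
    φ.not.sat w i = !φ.sat w i := by simp [TLFormula.sat]

@[simp] lemma sat_and (φ ψ : TLFormula σ) (w : List σ) (i : ℕ) :
    (φ.and ψ).sat w i = (φ.sat w i && ψ.sat w i) := by simp [TLFormula.sat]

@[simp] lemma sat_lt (t₁ t₂ : TLTerm σ) (w : List σ) (i : ℕ) :
    (TLFormula.lt t₁ t₂).sat w i = decide (t₁.val w i < t₂.val w i) := by
  simp [TLFormula.sat]

@[simp] lemma val_one (w : List σ) (i : ℕ) : (TLTerm.one : TLTerm σ).val w i = 1 := by
  simp [TLTerm.val]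

@[simp] lemma tlTrue_depth : (tlTrue : TLFormula σ).depth = 0 := by
  simp [tlTrue, TLFormula.depth, TLTerm.depth]

@[simp] lemma tlOr_depth (a b : TLFormula σ) :
    (tlOr a b).depth = max a.depth b.depth := by
  simp [tlOr, TLFormula.depth]

@[simp] lemma exLe_depth (θ : TLFormula σ) : (exLe θ).depth = θ.depth + 1 := by
  simp [exLe, TLFormula.depth, TLTerm.depth]

@[simp] lemma exLt_depth (θ : TLFormula σ) : (exLt θ).depth = θ.depth + 1 := by
  simp [exLt, exLe, tlOr, TLFormula.depth, TLTerm.depth]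

lemma count_pos_iff (θ : TLFormula σ) (w : List σ) (j : ℕ) :
    0 < (TLTerm.countL θ).val w j ↔ ∃ j' ≤ j, θ.sat w j' = true := by
  simp only [TLTerm.val, List.length_pos_iff_exists_mem, List.mem_filter, List.mem_range,
    Nat.lt_succ_iff]

lemma count_two_iff (θ : TLFormula σ) (w : List σ) (j : ℕ) :
    1 < (TLTerm.countL θ).val w j ↔
      ∃ a b, a < b ∧ b ≤ j ∧ θ.sat w a = true ∧ θ.sat w b = true := by
  have hnd : ((List.range (j + 1)).filter (fun j' => θ.sat w j')).Nodup :=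
    List.nodup_range.filter _
  show 1 < ((List.range (j + 1)).filter (fun j' => θ.sat w j')).length ↔ _
  rw [← List.toFinset_card_of_nodup hnd, Finset.one_lt_card]
  constructor
  · rintro ⟨a, ha, b, hb, hab⟩
    simp only [List.mem_toFinset, List.mem_filter, List.mem_range, Nat.lt_succ_iff] at ha hb
    rcases lt_or_gt_of_ne hab with h | h
    · exact ⟨a, b, h, hb.1, ha.2, hb.2⟩
    · exact ⟨b, a, h, ha.1, hb.2, ha.2⟩
  · rintro ⟨a, b, hab, hb, sa, sb⟩
    refine ⟨a, ?_, b, ?_, Nat.ne_of_lt hab⟩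
    · simp only [List.mem_toFinset, List.mem_filter, List.mem_range, Nat.lt_succ_iff]
      exact ⟨le_trans (le_of_lt hab) hb, sa⟩
    · simp only [List.mem_toFinset, List.mem_filter, List.mem_range, Nat.lt_succ_iff]
      exact ⟨hb, sb⟩

lemma exLe_sat (θ : TLFormula σ) (w : List σ) (j : ℕ) :
    (exLe θ).sat w j = true ↔ ∃ j' ≤ j, θ.sat w j' = true := by
  rw [← count_pos_iff]
  simp [exLe, TLFormula.sat, TLTerm.val, Nat.lt_one_iff, Nat.pos_iff_ne_zero]

lemma exLt_sat (θ : TLFormula σ) (w : List σ) (j : ℕ) :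
    (exLt θ).sat w j = true ↔ ∃ j' < j, θ.sat w j' = true := by
  simp only [exLt, tlOr_sat, sat_lt, sat_and, sat_not, val_one, Bool.or_eq_true,
    Bool.and_eq_true, decide_eq_true_eq, Bool.not_eq_true', exLe_sat]
  constructor
  · rintro (h | ⟨⟨j', hj', hs⟩, hnot⟩)
    · obtain ⟨a, b, hab, hb, sa, _⟩ := (count_two_iff θ w j).mp h
      exact ⟨a, lt_of_lt_of_le hab hb, sa⟩
    · refine ⟨j', lt_of_le_of_ne hj' ?_, hs⟩
      rintro rfl; rw [hs] at hnot; cases hnot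
  · rintro ⟨j', hj', hs⟩
    by_cases hj : θ.sat w j = true
    · exact Or.inl ((count_two_iff θ w j).mpr ⟨j', j, hj', le_refl j, hs, hj⟩)
    · exact Or.inr ⟨⟨j', le_of_lt hj', hs⟩, by simpa using hj⟩

lemma snoc_sublist_snoc {α : Type*} {s t : List α} {c a : α}
    (h : (s ++ [c]).Sublist (t ++ [a])) :
    (s ++ [c]).Sublist t ∨ (c = a ∧ s.Sublist t) := by
  have h' : (c :: s.reverse).Sublist (a :: t.reverse) := by
    simpa [List.reverse_append] using List.reverse_sublist.mpr h
  rcases List.sublist_cons_iff.mp h' with h2 | ⟨r, hr, h2⟩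
  · left
    have h3 : (s ++ [c]).reverse.Sublist t.reverse := by
      simpa [List.reverse_append] using h2
    exact List.reverse_sublist.mp h3
  · right
    obtain ⟨rfl, rfl⟩ : c = a ∧ r = s.reverse := by
      constructor <;> injection hr <;> simp_all
    exact ⟨rfl, List.reverse_sublist.mp h2⟩

lemma snoc_sublist_take_iff (w : List σ) (c : σ) (l : List σ) (j : ℕ) :
    (l ++ [c]).Sublist (w.take j) ↔
      ∃ j' < j, w[j']? = some c ∧ l.Sublist (w.take j') := by
  induction j with
  | zero =>
    simp only [List.take_zero, Nat.not_lt_zero, false_and, exists_false, exists_const,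
      iff_false]
    intro h
    have := h.length_le
    simp at this
  | succ j ih =>
    constructor
    · intro h
      by_cases hj : w.length ≤ j
      · rw [List.take_of_length_le (le_trans hj (Nat.le_succ j)),
          ← List.take_of_length_le hj] at h
        obtain ⟨j', hj', hc, hl⟩ := ih.mp h
        exact ⟨j', Nat.lt_succ_of_lt hj', hc, hl⟩
      · push_neg at hj
        have hget : w[j]? = some (w[j]'hj) := List.getElem?_eq_getElem hj
        rw [List.take_succ, hget] at h
        have h' : (l ++ [c]).Sublist (List.take j w ++ [w[j]]) := by simpa using h
        rcases snoc_sublist_snoc h' with h2 | ⟨rfl, h2⟩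
        · obtain ⟨j', hj', hc, hl⟩ := ih.mp h2
          exact ⟨j', Nat.lt_succ_of_lt hj', hc, hl⟩
        · exact ⟨j, Nat.lt_succ_self j, hget, h2⟩
    · rintro ⟨j', hj', hc, hl⟩
      have hjlen : j' < w.length := by
        rcases List.getElem?_eq_some_iff.mp hc with ⟨h, _⟩
        exact h
      have h1 : (l ++ [c]).Sublist (w.take (j' + 1)) := by
        rw [List.take_succ, hc]
        exact hl.append (List.Sublist.refl [c])
      exact h1.trans ((List.take_prefix_take_left (Nat.succ_le_of_lt hj')).sublist)

lemma strictφ_sat (r : List σ) (w : List σ) (j : ℕ) :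
    (strictφ r).sat w j = true ↔ r.reverse.Sublist (w.take j) := by
  induction r generalizing w j with
  | nil => simp [strictφ, List.nil_sublist]
  | cons c r ih =>
    rw [strictφ, exLt_sat]
    simp only [TLFormula.sat, Bool.and_eq_true, decide_eq_true_eq, ih]
    rw [List.reverse_cons, snoc_sublist_take_iff]

lemma topφ_sat (r : List σ) (w : List σ) (i : ℕ) :
    (topφ r).sat w i = true ↔ r.reverse.Sublist (w.take (i + 1)) := by
  cases r with
  | nil => simp [topφ, List.nil_sublist]
  | cons c r =>
    rw [topφ, exLe_sat]
    simp only [TLFormula.sat, Bool.and_eq_true, decide_eq_true_eq, strictφ_sat]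
    rw [List.reverse_cons, snoc_sublist_take_iff]
    constructor
    · rintro ⟨j', hj', hc, hl⟩; exact ⟨j', Nat.lt_succ_of_le hj', hc, hl⟩
    · rintro ⟨j', hj', hc, hl⟩; exact ⟨j', Nat.lt_succ_iff.mp hj', hc, hl⟩

lemma strictφ_depth (r : List σ) : (strictφ r : TLFormula σ).depth ≤ r.length := by
  induction r with
  | nil => simp [strictφ]
  | cons c r ih =>
    rw [strictφ, exLt_depth]
    simp only [TLFormula.depth, List.length_cons]
    omega

lemma topφ_depth (r : List σ) : (topφ r : TLFormula σ).depth ≤ r.length := by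
  cases r with
  | nil => simp [topφ]
  | cons c r =>
    rw [topφ, exLe_depth]
    simp only [TLFormula.depth, List.length_cons]
    have := strictφ_depth (σ := σ) r
    omega

lemma mem_Jexpr (l : List σ) (w : List σ) : w ∈ Jexpr l ↔ l.Sublist w := by
  induction l generalizing w with
  | nil => exact iff_of_true trivial (List.nil_sublist w)
  | cons c rest ih =>
    simp only [Jexpr]
    constructor
    · intro h
      rw [Language.mem_mul] at h
      obtain ⟨a, ha, b, hb, rfl⟩ := h
      rw [Language.mem_mul] at ha
      obtain ⟨u, -, v, hv, rfl⟩ := ha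
      replace hv : v = [c] := hv
      subst hv
      have h1 : (c :: rest).Sublist (c :: b) := List.cons_sublist_cons.mpr ((ih b).mp hb)
      have h2 : (c :: b).Sublist (u ++ [c] ++ b) := by
        rw [List.append_assoc]
        exact List.sublist_append_right u ([c] ++ b)
      exact h1.trans h2
    · intro h
      rcases List.cons_sublist_iff.mp h with ⟨r₁, r₂, rfl, hc, hr⟩
      obtain ⟨s, t, rfl⟩ := List.append_of_mem hc
      rw [Language.mem_mul]
      refine ⟨s ++ [c], ?_, t ++ r₂, ?_, by simp⟩
      · rw [Language.mem_mul]
        exact ⟨s, trivial, [c], rfl, rfl⟩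
      · exact (ih (t ++ r₂)).mpr (hr.trans (List.sublist_append_right t r₂))

end Aux

/-- Every `k`-piecewise testable language over a finite alphabet is definable
by a TL[#←] formula of depth at most `k`. -/
theorem stmt1 (σ : Type) [Fintype σ] [DecidableEq σ] (k : ℕ) (L : Language σ)
    (hL : PiecewiseTestable k L) :
    ∃ φ : TLFormula σ, φ.depth ≤ k ∧ φ.defines L := by
  induction hL with
  | base h =>
    obtain ⟨l, hlen, rfl⟩ := h
    refine ⟨topφ l.reverse, ?_, ?_⟩
    · calc (topφ l.reverse : TLFormula σ).depth ≤ l.reverse.length := topφ_depth _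
        _ = l.length := List.length_reverse
        _ ≤ k := hlen
    · intro w hw
      rw [topφ_sat]
      have hlen0 : 0 < w.length := List.length_pos_iff.mpr hw
      rw [Nat.sub_add_cancel hlen0, List.take_length, List.reverse_reverse]
      exact mem_Jexpr l w
  | compl hs ih =>
    obtain ⟨φ, hd, hdef⟩ := ih
    refine ⟨φ.not, by simpa [TLFormula.depth] using hd, fun w hw => ?_⟩
    have := hdef w hw
    simp only [Set.mem_compl_iff, this, TLFormula.sat, Bool.not_eq_true',
      Bool.not_eq_true]
  | union h1 h2 ih1 ih2 =>
    obtain ⟨φ, hd1, hdef1⟩ := ih1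
    obtain ⟨ψ, hd2, hdef2⟩ := ih2
    refine ⟨tlOr φ ψ, by simp [hd1, hd2], fun w hw => ?_⟩
    simp only [Set.mem_union, hdef1 w hw, hdef2 w hw, tlOr_sat, Bool.or_eq_true]
  | inter h1 h2 ih1 ih2 =>
    obtain ⟨φ, hd1, hdef1⟩ := ih1
    obtain ⟨ψ, hd2, hdef2⟩ := ih2
    refine ⟨φ.and ψ, by simp [TLFormula.depth, hd1, hd2], fun w hw => ?_⟩
    simp only [Set.mem_inter_iff, hdef1 w hw, hdef2 w hw, TLFormula.sat,
      Bool.and_eq_true]
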